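/- For every integer n ≥ 1, Σ_{i=0}^{2^{n−1}} θ(n,i) = 2^{2n−2}. -/

import Mathlib

open Finset

/-- Two vertices of the hypercube `Q_n` are adjacent iff they differ in exactly one
coordinate. -/
def cubeEdge {n : ℕ} (u v : Fin n → Bool) : Prop :=
  (Finset.univ.filter (fun i => u i ≠ v i)).card = 1

instance {n : ℕ} (u v : Fin n → Bool) : Decidable (cubeEdge u v) := by
  unfold cubeEdge; infer_instance

/-- `θ(n,S)`: the number of edges of `Q_n` with exactly one endpoint in `S`. -/
def edgeBoundary (n : ℕ) (S : Finset (Fin n → Bool)) : ℕ :=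
  (Finset.univ.filter (fun p : (Fin n → Bool) × (Fin n → Bool) =>
    p.1 ∈ S ∧ p.2 ∉ S ∧ cubeEdge p.1 p.2)).card

/-- `θ(n,k) = min {θ(n,S) : S ⊆ V(Q_n), |S| = k}`. -/
noncomputable def thetaMin (n k : ℕ) : ℕ :=
  sInf {m | ∃ S : Finset (Fin n → Bool), S.card = k ∧ edgeBoundary n S = m}

/-- The half plane `{x : x_i = a}` of `Q_n`. -/
def halfPlane (n : ℕ) (i : Fin n) (a : Bool) : Finset (Fin n → Bool) :=
  Finset.univ.filter (fun x => x i = a)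

/-- `Type(S) = min_H |S ∩ H|`, minimum over the `2n` half planes of `Q_n`. -/
noncomputable def typeOf (n : ℕ) (S : Finset (Fin n → Bool)) : ℕ :=
  sInf {m | ∃ (i : Fin n) (a : Bool), (S ∩ halfPlane n i a).card = m}

/-- `θ(n,k,t) = min {θ(n,S) : |S| = k, Type(S) = t}`. -/
noncomputable def thetaMinType (n k t : ℕ) : ℕ :=
  sInf {m | ∃ S : Finset (Fin n → Bool),
    S.card = k ∧ typeOf n S = t ∧ edgeBoundary n S = m}

/-- Graph distance on the cycle `C_m` with vertices labelled by naturals. -/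
def cycleDist (m a b : ℕ) : ℕ := min (Nat.dist a b) (m - Nat.dist a b)

/-- The wirelength of an embedding `η` of `Q_n` into the cycle `C_{2^n}`:
the sum of cycle distances over all (unordered) edges of `Q_n`.  (The sum over
ordered pairs counts every edge twice, whence the division by `2`.) -/
def wirelength (n : ℕ) (η : (Fin n → Bool) → ℕ) : ℕ :=
  ((Finset.univ.filter (fun p : (Fin n → Bool) × (Fin n → Bool) =>
    cubeEdge p.1 p.2)).sum (fun p => cycleDist (2^n) (η p.1) (η p.2))) / 2

/-- The reflected Gray code embedding `ξ_n(x) = (y)_2 + 1`, where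
`y_i = (x_1 + ⋯ + x_i) mod 2`. -/
def xi (n : ℕ) (x : Fin n → Bool) : ℕ :=
  (Finset.univ.sum (fun i : Fin n =>
    ((Finset.univ.filter (fun j : Fin n => j ≤ i ∧ x j = true)).card % 2)
      * 2 ^ (n - 1 - (i : ℕ)))) + 1

/-- `f(x) = 3/4 − (64/7)(x − 1/2)²`. -/
noncomputable def fGuu (x : ℝ) : ℝ := 3/4 - 64/7 * (x - 1/2)^2

/-- `takDelta i` is `Δ_{i+1}`: `Δ_1(x) = 1/2 − |x − 1/2|`,
`Δ_{n}(x) = (1/2)Δ_{n−1}(2x − ⌊2x⌋)`. -/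
noncomputable def takDelta : ℕ → ℝ → ℝ
  | 0, x => 1/2 - |x - 1/2|
  | n+1, x => takDelta n (2*x - (⌊2*x⌋ : ℝ)) / 2

/-- `m_n(x) = Σ_{i=1}^n Δ_i(x)`, the n-th partial sum of the Takagi function. -/
noncomputable def mTakagi (n : ℕ) (x : ℝ) : ℝ := ∑ i ∈ Finset.range n, takDelta i x

/-- `y_N = ⌈2^N/24⌉ / 2^N`. -/
noncomputable def yGuu (N : ℕ) : ℝ := (⌈(2^N : ℝ)/24⌉ : ℝ) / 2^N

/-- `p_N = 1/2 − y_N`. -/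
noncomputable def pGuu (N : ℕ) : ℝ := 1/2 - yGuu N

/-- `g_{n,i,a}^{-1}(S)`, where `g_{n,i,a}` inserts the letter `a` at position `i`. -/
def gPre (n : ℕ) (i : Fin (n+1)) (a : Bool) (S : Finset (Fin (n+1) → Bool)) :
    Finset (Fin n → Bool) :=
  Finset.univ.filter (fun x => i.insertNth a x ∈ S)

def sBit : ℕ → ℕ
  | 0 => 0
  | (n+1) => sBit ((n+1)/2) + (n+1) % 2
decreasing_by exact Nat.div_lt_self (Nat.succ_pos n) one_lt_two

lemma sBit_eq (n : ℕ) (h : n ≠ 0) : sBit n = sBit (n/2) + n % 2 := by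
  obtain ⟨m, rfl⟩ := Nat.exists_eq_succ_of_ne_zero h
  rw [sBit]

lemma sBit_two_mul (t : ℕ) : sBit (2*t) = sBit t := by
  rcases Nat.eq_zero_or_pos t with h | h
  · simp [h]
  · rw [sBit_eq (2*t) (by omega)]
    simp [Nat.mul_div_cancel_left, Nat.mul_mod_right]

lemma sBit_two_mul_add_one (t : ℕ) : sBit (2*t+1) = sBit t + 1 := by
  rw [sBit_eq (2*t+1) (by omega)]
  have h1 : (2*t+1)/2 = t := by omega
  have h2 : (2*t+1) % 2 = 1 := by omega
  rw [h1, h2]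

lemma sBit_zero : sBit 0 = 0 := by rw [sBit]

lemma sBit_one : sBit 1 = 1 := by
  rw [sBit_eq 1 (by omega)]
  norm_num [sBit_zero]

def Fbit (k : ℕ) : ℕ := ∑ m ∈ Finset.range k, sBit m

lemma Fbit_zero : Fbit 0 = 0 := rfl

lemma Fbit_one : Fbit 1 = 0 := by
  rw [Fbit, Finset.sum_range_one, sBit_zero]

lemma Fbit_succ (k : ℕ) : Fbit (k+1) = Fbit k + sBit k := Finset.sum_range_succ _ _

lemma Fbit_two_mul (t : ℕ) : Fbit (2*t) = 2 * Fbit t + t := by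
  induction t with
  | zero => simp [Fbit]
  | succ t ih =>
    have : 2*(t+1) = (2*t) + 1 + 1 := by ring
    rw [this, Fbit_succ, Fbit_succ, ih, Fbit_succ, sBit_two_mul, sBit_two_mul_add_one]
    ring

lemma Fbit_two_mul_add_one (t : ℕ) : Fbit (2*t+1) = 2 * Fbit t + t + sBit t := by
  rw [Fbit_succ, Fbit_two_mul, sBit_two_mul]

lemma Fbit_superadd : ∀ N x y, x + y ≤ N → Fbit x + Fbit y + min x y ≤ Fbit (x+y) := by
  intro N
  induction N with
  | zero =>
    intro x y h
    have hx : x = 0 := by omega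
    have hy : y = 0 := by omega
    subst hx; subst hy; simp [Fbit]
  | succ N ih =>
    intro x y h
    rcases Nat.eq_zero_or_pos x with hx | hx
    · subst hx; simp [Fbit]
    rcases Nat.eq_zero_or_pos y with hy | hy
    · subst hy; simp [Fbit]
    rcases (by omega : x = 2*(x/2) ∨ x = 2*(x/2)+1) with hxe | hxe <;>
      rcases (by omega : y = 2*(y/2) ∨ y = 2*(y/2)+1) with hye | hye
    · obtain ⟨a, rfl⟩ : ∃ a, x = 2*a := ⟨x/2, hxe⟩
      obtain ⟨b, rfl⟩ : ∃ b, y = 2*b := ⟨y/2, hye⟩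
      have key := ih a b (by omega)
      have e1 : Fbit (2*a) = 2*Fbit a + a := Fbit_two_mul a
      have e2 : Fbit (2*b) = 2*Fbit b + b := Fbit_two_mul b
      have e3 : Fbit (2*a + 2*b) = 2*Fbit (a+b) + (a+b) := by
        rw [show 2*a+2*b = 2*(a+b) by ring, Fbit_two_mul]
      omega
    · obtain ⟨a, rfl⟩ : ∃ a, x = 2*a := ⟨x/2, hxe⟩
      obtain ⟨b, rfl⟩ : ∃ b, y = 2*b+1 := ⟨y/2, hye⟩
      have k1 := ih a b (by omega)
      have k2 := ih a (b+1) (by omega)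
      have e1 : Fbit (2*a) = 2*Fbit a + a := Fbit_two_mul a
      have e2 : Fbit (2*b+1) = 2*Fbit b + b + sBit b := Fbit_two_mul_add_one b
      have e3 : Fbit (2*a + (2*b+1)) = 2*Fbit (a+b) + (a+b) + sBit (a+b) := by
        rw [show 2*a+(2*b+1) = 2*(a+b)+1 by ring, Fbit_two_mul_add_one]
      have e4 : Fbit (a+b+1) = Fbit (a+b) + sBit (a+b) := Fbit_succ _
      have e5 : Fbit (b+1) = Fbit b + sBit b := Fbit_succ _
      have e6 : a + (b+1) = a + b + 1 := by ring
      rw [e6] at k2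
      omega
    · obtain ⟨a, rfl⟩ : ∃ a, x = 2*a+1 := ⟨x/2, hxe⟩
      obtain ⟨b, rfl⟩ : ∃ b, y = 2*b := ⟨y/2, hye⟩
      have k1 := ih a b (by omega)
      have k2 := ih (a+1) b (by omega)
      have e1 : Fbit (2*a+1) = 2*Fbit a + a + sBit a := Fbit_two_mul_add_one a
      have e2 : Fbit (2*b) = 2*Fbit b + b := Fbit_two_mul b
      have e3 : Fbit (2*a+1 + 2*b) = 2*Fbit (a+b) + (a+b) + sBit (a+b) := by
        rw [show 2*a+1+2*b = 2*(a+b)+1 by ring, Fbit_two_mul_add_one]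
      have e4 : Fbit (a+b+1) = Fbit (a+b) + sBit (a+b) := Fbit_succ _
      have e5 : Fbit (a+1) = Fbit a + sBit a := Fbit_succ _
      have e6 : a + 1 + b = a + b + 1 := by ring
      rw [e6] at k2
      omega
    · obtain ⟨a, rfl⟩ : ∃ a, x = 2*a+1 := ⟨x/2, hxe⟩
      obtain ⟨b, rfl⟩ : ∃ b, y = 2*b+1 := ⟨y/2, hye⟩
      have k1 := ih a (b+1) (by omega)
      have k2 := ih (a+1) b (by omega)
      have e1 : Fbit (2*a+1) = 2*Fbit a + a + sBit a := Fbit_two_mul_add_one a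
      have e2 : Fbit (2*b+1) = 2*Fbit b + b + sBit b := Fbit_two_mul_add_one b
      have e3 : Fbit (2*a+1 + (2*b+1)) = 2*Fbit (a+b+1) + (a+b+1) := by
        rw [show 2*a+1+(2*b+1) = 2*(a+b+1) by ring, Fbit_two_mul]
      have e4 : Fbit (a+b+1) = Fbit (a+b) + sBit (a+b) := Fbit_succ _
      have e5 : Fbit (a+1) = Fbit a + sBit a := Fbit_succ _
      have e6 : Fbit (b+1) = Fbit b + sBit b := Fbit_succ _
      have e7 : a + (b+1) = a + b + 1 := by ring
      have e8 : a + 1 + b = a + b + 1 := by ring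
      rw [e7] at k1; rw [e8] at k2
      omega

lemma Fbit_key (x y : ℕ) : Fbit x + Fbit y + min x y ≤ Fbit (x+y) :=
  Fbit_superadd (x+y) x y le_rfl
-- cubeEdge and Fin.cons
lemma cubeEdge_card {n : ℕ} (a b : Bool) (x y : Fin n → Bool) :
    (Finset.univ.filter (fun i => (Fin.cons a x : Fin (n+1) → Bool) i ≠ (Fin.cons b y : Fin (n+1) → Bool) i)).card
      = (if a ≠ b then 1 else 0) + (Finset.univ.filter (fun i => x i ≠ y i)).card := by
  rw [Finset.card_filter, Finset.card_filter, Fin.sum_univ_succ]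
  simp

lemma cubeEdge_cons_same {n : ℕ} (a : Bool) (x y : Fin n → Bool) :
    cubeEdge (Fin.cons a x) (Fin.cons a y) ↔ cubeEdge x y := by
  unfold cubeEdge
  rw [cubeEdge_card]
  simp

lemma cubeEdge_cons_ne {n : ℕ} {a b : Bool} (h : a ≠ b) (x y : Fin n → Bool) :
    cubeEdge (Fin.cons a x) (Fin.cons b y) ↔ x = y := by
  unfold cubeEdge
  rw [cubeEdge_card, if_pos h]
  constructor
  · intro hc
    have : (Finset.univ.filter (fun i => x i ≠ y i)).card = 0 := by omega
    rw [Finset.card_eq_zero, Finset.filter_eq_empty_iff] at this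
    funext i
    have := this (Finset.mem_univ i)
    simpa using this
  · rintro rfl; simp

def Sl {n : ℕ} (a : Bool) (S : Finset (Fin (n+1) → Bool)) : Finset (Fin n → Bool) :=
  Finset.univ.filter (fun x => Fin.cons a x ∈ S)

lemma mem_Sl {n : ℕ} {a : Bool} {S : Finset (Fin (n+1) → Bool)} {x : Fin n → Bool} :
    x ∈ Sl a S ↔ Fin.cons a x ∈ S := by simp [Sl]

def consEquiv (n : ℕ) : Bool × (Fin n → Bool) ≃ (Fin (n+1) → Bool) :=
  Fin.consEquiv (fun _ => Bool)

lemma card_slices {n : ℕ} (S : Finset (Fin (n+1) → Bool)) :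
    S.card = (Sl false S).card + (Sl true S).card := by
  classical
  have h1 : S.card = ∑ u : Fin (n+1) → Bool, if u ∈ S then 1 else 0 := by
    rw [← Finset.card_filter]
    congr 1
    ext u; simp
  have hf : ∀ a : Bool, (Sl a S).card = ∑ y : Fin n → Bool,
      if Fin.cons a y ∈ S then 1 else 0 := by
    intro a
    rw [Sl, Finset.card_filter]
  rw [h1, ← Equiv.sum_comp (consEquiv n) (fun u => if u ∈ S then 1 else 0),
    Fintype.sum_prod_type, hf, hf]
  rw [Fintype.sum_bool]
  simp only [consEquiv, Fin.consEquiv, Equiv.coe_fn_mk]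
  rw [add_comm]
  rfl

lemma edgeBoundary_sum (n : ℕ) (S : Finset (Fin n → Bool)) :
    edgeBoundary n S = ∑ u : Fin n → Bool, ∑ v : Fin n → Bool,
      if u ∈ S ∧ v ∉ S ∧ cubeEdge u v then 1 else 0 := by
  rw [edgeBoundary, Finset.card_filter, Fintype.sum_prod_type]

lemma same_count {n : ℕ} (a : Bool) (S : Finset (Fin (n+1) → Bool)) :
    (∑ x : Fin n → Bool, ∑ y : Fin n → Bool,
      if Fin.cons a x ∈ S ∧ Fin.cons a y ∉ S ∧
        cubeEdge (Fin.cons a x) (Fin.cons a y) then 1 else 0)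
      = edgeBoundary n (Sl a S) := by
  rw [edgeBoundary_sum]
  refine Finset.sum_congr rfl (fun x _ => Finset.sum_congr rfl (fun y _ => ?_))
  congr 1
  simp only [eq_iff_iff, mem_Sl, cubeEdge_cons_same]

lemma diff_count {n : ℕ} {a b : Bool} (hab : a ≠ b) (S : Finset (Fin (n+1) → Bool)) :
    (∑ x : Fin n → Bool, ∑ y : Fin n → Bool,
      if Fin.cons a x ∈ S ∧ Fin.cons b y ∉ S ∧
        cubeEdge (Fin.cons a x) (Fin.cons b y) then 1 else 0)
      = ((Sl a S) \ (Sl b S)).card := by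
  have h1 : ∀ x : Fin n → Bool, (∑ y : Fin n → Bool,
      if Fin.cons a x ∈ S ∧ Fin.cons b y ∉ S ∧
        cubeEdge (Fin.cons a x) (Fin.cons b y) then 1 else 0)
      = if Fin.cons a x ∈ S ∧ Fin.cons b x ∉ S then 1 else 0 := by
    intro x
    rw [Finset.sum_eq_single_of_mem x (Finset.mem_univ x)]
    · congr 1
      simp only [eq_iff_iff, cubeEdge_cons_ne hab]
      tauto
    · intro y _ hy
      rw [if_neg]
      rintro ⟨-, -, he⟩
      exact hy ((cubeEdge_cons_ne hab x y).mp he).symm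
  rw [Finset.sum_congr rfl (fun x _ => h1 x)]
  rw [← Finset.card_filter]
  congr 1
  ext x
  simp only [Finset.mem_filter, Finset.mem_univ, true_and, Finset.mem_sdiff, mem_Sl]

lemma boundary_slices {n : ℕ} (S : Finset (Fin (n+1) → Bool)) :
    edgeBoundary (n+1) S = edgeBoundary n (Sl false S) + edgeBoundary n (Sl true S)
      + (((Sl false S) \ (Sl true S)).card + ((Sl true S) \ (Sl false S)).card) := by
  rw [edgeBoundary_sum]
  rw [← Equiv.sum_comp (consEquiv n) (fun u => ∑ v : Fin (n+1) → Bool,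
    if u ∈ S ∧ v ∉ S ∧ cubeEdge u v then 1 else 0)]
  have hinner : ∀ p : Bool × (Fin n → Bool),
      (∑ v : Fin (n+1) → Bool,
        if (consEquiv n) p ∈ S ∧ v ∉ S ∧ cubeEdge ((consEquiv n) p) v then 1 else 0)
      = ∑ q : Bool × (Fin n → Bool),
        if Fin.cons p.1 p.2 ∈ S ∧ Fin.cons q.1 q.2 ∉ S ∧
          cubeEdge (Fin.cons p.1 p.2) (Fin.cons q.1 q.2) then 1 else 0 := by
    intro p
    rw [← Equiv.sum_comp (consEquiv n) (fun v =>
      if (consEquiv n) p ∈ S ∧ v ∉ S ∧ cubeEdge ((consEquiv n) p) v then 1 else 0)]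
    rfl
  rw [Finset.sum_congr rfl (fun p _ => hinner p)]
  rw [Fintype.sum_prod_type]
  rw [Fintype.sum_bool]
  have hswap : ∀ (a : Bool) (x : Fin n → Bool),
      (∑ q : Bool × (Fin n → Bool),
        if Fin.cons a x ∈ S ∧ Fin.cons q.1 q.2 ∉ S ∧
          cubeEdge (Fin.cons a x) (Fin.cons q.1 q.2) then 1 else 0)
      = (∑ y : Fin n → Bool, if Fin.cons a x ∈ S ∧ Fin.cons true y ∉ S ∧
          cubeEdge (Fin.cons a x) (Fin.cons true y) then 1 else 0)
        + (∑ y : Fin n → Bool, if Fin.cons a x ∈ S ∧ Fin.cons false y ∉ S ∧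
          cubeEdge (Fin.cons a x) (Fin.cons false y) then 1 else 0) := by
    intro a x
    rw [Fintype.sum_prod_type, Fintype.sum_bool]
  rw [Finset.sum_congr rfl (fun x _ => hswap true x),
    Finset.sum_congr rfl (fun x _ => hswap false x)]
  rw [Finset.sum_add_distrib, Finset.sum_add_distrib]
  rw [same_count true S, same_count false S,
    diff_count (by simp : (true : Bool) ≠ false) S,
    diff_count (by simp : (false : Bool) ≠ true) S]
  omega

lemma edgeBoundary_dim0 (S : Finset (Fin 0 → Bool)) : edgeBoundary 0 S = 0 := by
  have h : ∀ u v : Fin 0 → Bool, ¬ cubeEdge u v := by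
    intro u v hc
    unfold cubeEdge at hc
    simp at hc
  simp [edgeBoundary, h]

lemma edgeBoundary_empty (n : ℕ) : edgeBoundary n (∅ : Finset (Fin n → Bool)) = 0 := by
  simp [edgeBoundary]

lemma edgeBoundary_univ (n : ℕ) : edgeBoundary n (Finset.univ : Finset (Fin n → Bool)) = 0 := by
  simp [edgeBoundary]

lemma theta_lower : ∀ (n : ℕ) (S : Finset (Fin n → Bool)),
    n * S.card ≤ edgeBoundary n S + 2 * Fbit S.card := by
  intro n
  induction n with
  | zero => intro S; simp
  | succ n ih =>
    intro S
    set A := Sl false S with hAdef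
    set B := Sl true S with hBdef
    have hcard := card_slices S
    have hbd := boundary_slices S
    have hA := ih A
    have hB := ih B
    have hkey := Fbit_key A.card B.card
    have hd1 : (A \ B).card + (A ∩ B).card = A.card := Finset.card_sdiff_add_card_inter A B
    have hd2 : (B \ A).card + (B ∩ A).card = B.card := Finset.card_sdiff_add_card_inter B A
    have hio : (A ∩ B).card = (B ∩ A).card := by rw [Finset.inter_comm]
    have hm1 : (A ∩ B).card ≤ A.card := Finset.card_le_card Finset.inter_subset_left
    have hm2 : (A ∩ B).card ≤ B.card := Finset.card_le_card Finset.inter_subset_right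
    have hmin : (A ∩ B).card ≤ min A.card B.card := le_min hm1 hm2
    have expand : (n+1) * S.card = n * A.card + n * B.card + S.card := by rw [hcard]; ring
    rw [expand, hbd, hcard]
    linarith [hkey, hA, hB]

def jn {n : ℕ} (A B : Finset (Fin n → Bool)) : Finset (Fin (n+1) → Bool) :=
  Finset.univ.filter (fun u => if u 0 = true then Fin.tail u ∈ B else Fin.tail u ∈ A)

lemma Sl_jn_false {n : ℕ} (A B : Finset (Fin n → Bool)) : Sl false (jn A B) = A := by
  ext x; simp [Sl, jn, Fin.tail_cons]

lemma Sl_jn_true {n : ℕ} (A B : Finset (Fin n → Bool)) : Sl true (jn A B) = B := by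
  ext x; simp [Sl, jn, Fin.tail_cons]

lemma card_jn {n : ℕ} (A B : Finset (Fin n → Bool)) : (jn A B).card = A.card + B.card := by
  rw [card_slices (jn A B), Sl_jn_false, Sl_jn_true]

lemma boundary_jn {n : ℕ} (A B : Finset (Fin n → Bool)) :
    edgeBoundary (n+1) (jn A B) = edgeBoundary n A + edgeBoundary n B
      + ((A \ B).card + (B \ A).card) := by
  rw [boundary_slices (jn A B), Sl_jn_false, Sl_jn_true]

def seg : (n : ℕ) → ℕ → Finset (Fin n → Bool)
  | 0, k => if k = 0 then ∅ else Finset.univ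
  | n+1, k => if k ≤ 2^n then jn (seg n k) ∅ else jn Finset.univ (seg n (k - 2^n))

lemma card_univ_fun (n : ℕ) : (Finset.univ : Finset (Fin n → Bool)).card = 2^n := by
  simp [Finset.card_univ]

lemma seg_card : ∀ n k, k ≤ 2^n → (seg n k).card = k := by
  intro n
  induction n with
  | zero =>
    intro k hk
    interval_cases k
    · simp [seg]
    · rw [seg]; simp [card_univ_fun]
  | succ n ih =>
    intro k hk
    rw [seg]
    split_ifs with h
    · rw [card_jn, ih k h]; simp
    · rw [card_jn, card_univ_fun, ih (k - 2^n) (by omega)]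
      have : 2^(n+1) = 2^n + 2^n := by ring
      omega

lemma Fbit_pow (m : ℕ) : 2 * Fbit (2^m) = m * 2^m := by
  induction m with
  | zero => simp [Fbit, sBit_zero]
  | succ m ih =>
    have h1 : (2:ℕ)^(m+1) = 2 * 2^m := by ring
    rw [h1, Fbit_two_mul]
    have : 2 * (2 * Fbit (2^m) + 2^m) = 2 * (2* Fbit (2^m)) + 2*2^m := by ring
    rw [this, ih]; ring

lemma sBit_pow_add : ∀ m, ∀ j, j < 2^m → sBit (2^m + j) = sBit j + 1 := by
  intro m
  induction m with
  | zero =>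
    intro j hj
    interval_cases j
    norm_num [sBit_one, sBit_zero]
  | succ m ih =>
    intro j hj
    rcases (by omega : j = 2*(j/2) ∨ j = 2*(j/2)+1) with hje | hje
    · obtain ⟨q, hq⟩ : ∃ q, j = 2*q := ⟨j/2, hje⟩
      subst hq
      have hq2 : q < 2^m := by rw [pow_succ] at hj; omega
      have h3 : 2^(m+1) + 2*q = 2*(2^m + q) := by ring
      rw [h3, sBit_two_mul, ih q hq2, sBit_two_mul]
    · obtain ⟨q, hq⟩ : ∃ q, j = 2*q+1 := ⟨j/2, hje⟩
      subst hq
      have hq2 : q < 2^m := by rw [pow_succ] at hj; omega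
      have h3 : 2^(m+1) + (2*q+1) = 2*(2^m + q)+1 := by ring
      rw [h3, sBit_two_mul_add_one, ih q hq2, sBit_two_mul_add_one]

lemma Fbit_pow_add (m : ℕ) : ∀ j, j ≤ 2^m → Fbit (2^m + j) = Fbit (2^m) + Fbit j + j := by
  intro j
  induction j with
  | zero => intro _; simp [Fbit_zero]
  | succ j ih =>
    intro hj
    have h1 : 2^m + (j+1) = (2^m + j) + 1 := by ring
    rw [h1, Fbit_succ, ih (by omega), sBit_pow_add m j (by omega), Fbit_succ]
    ring

lemma seg_boundary : ∀ n k, k ≤ 2^n → edgeBoundary n (seg n k) + 2 * Fbit k = n * k := by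
  intro n
  induction n with
  | zero =>
    intro k hk
    interval_cases k
    · rw [seg]; simp [edgeBoundary_dim0, Fbit_zero]
    · rw [seg]; simp [edgeBoundary_dim0, Fbit_one]
  | succ n ih =>
    intro k hk
    rw [seg]
    split_ifs with h
    · rw [boundary_jn]
      have hcard : (seg n k).card = k := seg_card n k h
      have hih := ih k h
      simp only [Finset.sdiff_empty, Finset.empty_sdiff, Finset.card_empty, hcard,
        edgeBoundary_empty]
      have : (n+1) * k = n * k + k := by ring
      omega
    · push_neg at h
      set j := k - 2^n with hj
      have hjk : k = 2^n + j := by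
        have : 2^(n+1) = 2^n + 2^n := by ring
        omega
      have hj2 : j ≤ 2^n := by
        have : 2^(n+1) = 2^n + 2^n := by ring
        omega
      rw [boundary_jn]
      have hB : edgeBoundary n (seg n j) + 2 * Fbit j = n * j := ih j hj2
      have hsd1 : ((Finset.univ : Finset (Fin n → Bool)) \ seg n j).card = 2^n - j := by
        rw [Finset.card_sdiff_of_subset (Finset.subset_univ _), card_univ_fun, seg_card n j hj2]
      have hsd2 : (seg n j \ (Finset.univ : Finset (Fin n → Bool))).card = 0 := by
        simp
      rw [hsd1, hsd2, edgeBoundary_univ, hjk]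
      have hF : Fbit (2^n + j) = Fbit (2^n) + Fbit j + j := Fbit_pow_add n j hj2
      have hFp : 2 * Fbit (2^n) = n * 2^n := Fbit_pow n
      have hexp : (n+1) * (2^n + j) = n * 2^n + n * j + 2^n + j := by ring
      rw [hF, hexp]
      have hsub : 2^n - j + j = 2^n := Nat.sub_add_cancel hj2
      linarith [hB, hFp, hsub]

lemma thetaMin_eq (n k : ℕ) (hk : k ≤ 2^n) : thetaMin n k + 2 * Fbit k = n * k := by
  have hseg : (seg n k).card = k := seg_card n k hk
  have hne : {m | ∃ S : Finset (Fin n → Bool), S.card = k ∧ edgeBoundary n S = m}.Nonempty :=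
    ⟨edgeBoundary n (seg n k), seg n k, hseg, rfl⟩
  obtain ⟨S, hS, hθ⟩ := Nat.sInf_mem hne
  have hle : thetaMin n k ≤ edgeBoundary n (seg n k) :=
    Nat.sInf_le ⟨seg n k, hseg, rfl⟩
  have h1 := theta_lower n S
  rw [hS] at h1
  have hθ' : edgeBoundary n S = thetaMin n k := hθ
  rw [hθ'] at h1
  have h2 := seg_boundary n k hk
  linarith

lemma sum_range_two_mul (g : ℕ → ℕ) (N : ℕ) :
    ∑ k ∈ Finset.range (2*N), g k = ∑ j ∈ Finset.range N, (g (2*j) + g (2*j+1)) := by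
  induction N with
  | zero => simp
  | succ N ih =>
    rw [show 2*(N+1) = (2*N)+1+1 by ring, Finset.sum_range_succ, Finset.sum_range_succ,
      ih, Finset.sum_range_succ]
    omega

lemma V_rec (m : ℕ) :
    (∑ k ∈ Finset.range (2^(m+1)+1), Fbit k) + Fbit (2^m)
      = 4 * (∑ k ∈ Finset.range (2^m+1), Fbit k) + 4^m := by
  set N := 2^m with hN
  have hN1 : 1 ≤ N := Nat.one_le_two_pow
  have h2N : 2^(m+1) = 2*N := by rw [hN]; ring
  have hsplit : ∑ k ∈ Finset.range (2*N), Fbit k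
      = ∑ j ∈ Finset.range N, (Fbit (2*j) + Fbit (2*j+1)) := sum_range_two_mul _ N
  have hterm : ∀ j, Fbit (2*j) + Fbit (2*j+1) = 4 * Fbit j + 2*j + sBit j := by
    intro j
    rw [Fbit_two_mul, Fbit_two_mul_add_one]
    ring
  have hsplit2 : ∑ k ∈ Finset.range (2*N), Fbit k
      = 4 * (∑ j ∈ Finset.range N, Fbit j) + 2 * (∑ j ∈ Finset.range N, j) + Fbit N := by
    rw [hsplit, Finset.sum_congr rfl (fun j _ => hterm j)]
    rw [Finset.sum_add_distrib, Finset.sum_add_distrib, ← Finset.mul_sum, ← Finset.mul_sum]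
    rfl
  have hU : (∑ j ∈ Finset.range (N+1), Fbit j) = (∑ j ∈ Finset.range N, Fbit j) + Fbit N :=
    Finset.sum_range_succ _ _
  have hV' : (∑ k ∈ Finset.range (2*N+1), Fbit k) = (∑ k ∈ Finset.range (2*N), Fbit k)
      + Fbit (2*N) := Finset.sum_range_succ _ _
  have hF2N : Fbit (2*N) = 2 * Fbit N + N := Fbit_two_mul N
  have hGauss : (∑ j ∈ Finset.range N, j) * 2 = N * (N-1) := Finset.sum_range_id_mul_two N
  have h4 : (4:ℕ)^m = N * N := by
    rw [hN, ← pow_add, ← two_mul, pow_mul]; norm_num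
  have hNN : N * (N - 1) + N = N * N := by
    have h : N - 1 + 1 = N := by omega
    calc N * (N-1) + N = N * ((N-1)+1) := by ring
    _ = N * N := by rw [h]
  rw [h2N, hV', hsplit2, hF2N]
  linarith [hU, hGauss, hNN, h4]

lemma AI (m : ℕ) :
    ∑ k ∈ Finset.range (2^m+1), (m+1)*k
      = 4^m + 2 * (∑ k ∈ Finset.range (2^m+1), Fbit k) := by
  induction m with
  | zero =>
    norm_num [Finset.sum_range_succ, Fbit_zero, Fbit_one]
  | succ m ih =>
    rw [← Finset.mul_sum] at ih ⊢
    set T : ℕ := ∑ k ∈ Finset.range (2^m+1), k with hT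
    set T' : ℕ := ∑ k ∈ Finset.range (2^(m+1)+1), k with hT'
    set V : ℕ := ∑ k ∈ Finset.range (2^m+1), Fbit k with hV
    set V' : ℕ := ∑ k ∈ Finset.range (2^(m+1)+1), Fbit k with hV'
    set P : ℕ := 2^m with hP
    have h1 : 2*T = P*P + P := by
      have h := Finset.sum_range_id_mul_two (P+1)
      simp only [Nat.add_sub_cancel] at h
      rw [hT]
      linarith [h]
    have h2 : 2*T' = 4*(P*P) + 2*P := by
      have h := Finset.sum_range_id_mul_two (2^(m+1)+1)
      simp only [Nat.add_sub_cancel] at h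
      have hPP : (2:ℕ)^(m+1) = 2*P := by rw [hP]; ring
      rw [hPP] at h
      rw [hT', hPP]
      linarith [h]
    have h3 : (m+1)*T = 4^m + 2*V := ih
    have h4 : V' + Fbit P = 4*V + 4^m := V_rec m
    have h5 : 2 * Fbit P = m * P := Fbit_pow m
    have h6 : (4:ℕ)^m = P*P := by
      rw [hP, ← pow_add, ← two_mul, pow_mul]; norm_num
    have h7 : (4:ℕ)^(m+1) = 4*(P*P) := by rw [pow_succ, h6]; ring
    zify at h1 h2 h3 h4 h5 h6 h7 ⊢
    have hg2 : 2*(((m:ℤ)+1+1)*(T':ℤ)) = 2*((4:ℤ)^(m+1) + 2*(V':ℤ)) := by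
      linear_combination (m+2)*h2 - 4*h4 + 8*h3 - (4*(m+1))*h1 + 2*h5 - 2*h7 + 4*h6
    linarith [hg2]


/-- Guu, Claim 12. `Σ_{i=0}^{2^{n−1}} θ(n,i) = 2^{2n−2}`. -/
theorem sum_theta_eq (n : ℕ) (hn : 1 ≤ n) :
    ∑ i ∈ Finset.range (2^(n-1) + 1), thetaMin n i = 2^(2*n - 2) := by
  obtain ⟨m, rfl⟩ : ∃ m, n = m + 1 := ⟨n - 1, by omega⟩
  have hsimp1 : (m + 1) - 1 = m := by omega
  have hsimp2 : 2*(m+1) - 2 = 2*m := by omega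
  rw [hsimp1, hsimp2]
  have hpt : ∀ k ∈ Finset.range (2^m + 1), thetaMin (m+1) k + 2 * Fbit k = (m+1) * k := by
    intro k hk
    rw [Finset.mem_range] at hk
    apply thetaMin_eq
    have : (2:ℕ)^m ≤ 2^(m+1) := Nat.pow_le_pow_right (by norm_num) (by omega)
    omega
  have hsum : ∑ k ∈ Finset.range (2^m+1), (thetaMin (m+1) k + 2 * Fbit k)
      = ∑ k ∈ Finset.range (2^m+1), (m+1)*k := Finset.sum_congr rfl hpt
  rw [Finset.sum_add_distrib, ← Finset.mul_sum] at hsum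
  have hAI := AI m
  have h2pow : (2:ℕ)^(2*m) = 4^m := by
    rw [show (4:ℕ) = 2^2 by norm_num, ← pow_mul]
  rw [h2pow]
  omega
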